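/- arXiv:2012.07207 — 2 statements merged into one kernel-verified Lean document; each statement's English description precedes it below -/
import Mathlib

section
/- Let f(k) = ∫_0^1 exp(ψ·(a(r)·k + b(r))) dr with a, b continuous, |a(r)| ≤ θ·(1-r), 0 ≤ b(r) ≤ ψ(1-r) for some θ ∈ (0,1], and let K = 1/θ. Then for any k ∈ [1,K] and L ∈ ℕ, the truncation error of the Taylor series of f at 0 satisfies |f(k) − Σ_{l=0}^{L} f^{(l)}(0) k^l / l!| ≤ e^{2ψ}·ψ^{L+1}/(L+2)!. -/
open Real intervalIntegral

open MeasureTheory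

set_option maxHeartbeats 1000000

lemma exp_tail_bound (x : ℝ) (n : ℕ) :
    |Real.exp x - ∑ i ∈ Finset.range n, x ^ i / i.factorial|
      ≤ |x| ^ n / n.factorial * Real.exp |x| := by
  have hexp : ∀ y : ℝ, Real.exp y = ∑' i : ℕ, y ^ i / i.factorial := by
    intro y
    rw [Real.exp_eq_exp_ℝ, NormedSpace.exp_eq_tsum_div]
  have hs : Summable (fun i : ℕ => x ^ i / (i.factorial : ℝ)) :=
    Real.summable_pow_div_factorial x
  have h1 : Real.exp x - ∑ i ∈ Finset.range n, x ^ i / i.factorial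
      = ∑' i : ℕ, x ^ (i + n) / ((i + n).factorial : ℝ) := by
    rw [hexp x, ← Summable.sum_add_tsum_nat_add n hs]
    ring
  have hterm : ∀ i : ℕ, |x| ^ (i + n) / ((i + n).factorial : ℝ)
      ≤ |x| ^ n / n.factorial * (|x| ^ i / i.factorial) := by
    intro i
    rw [div_mul_div_comm, ← pow_add, add_comm n i]
    have hfac : (n.factorial * i.factorial : ℝ) ≤ ((i + n).factorial : ℝ) := by
      exact_mod_cast Nat.le_of_dvd (i + n).factorial_pos
        (by rw [mul_comm]; exact Nat.factorial_mul_factorial_dvd_factorial_add i n)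
    gcongr
  have hsum2 : Summable (fun i : ℕ => |x| ^ n / n.factorial * (|x| ^ i / i.factorial)) :=
    (Real.summable_pow_div_factorial |x|).mul_left _
  have hsum1 : Summable (fun i : ℕ => |x| ^ (i + n) / ((i + n).factorial : ℝ)) :=
    (summable_nat_add_iff n).mpr (Real.summable_pow_div_factorial |x|)
  calc |Real.exp x - ∑ i ∈ Finset.range n, x ^ i / i.factorial|
      = |∑' i : ℕ, x ^ (i + n) / ((i + n).factorial : ℝ)| := by rw [h1]
    _ ≤ ∑' i : ℕ, |x| ^ (i + n) / ((i + n).factorial : ℝ) := by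
        have := norm_tsum_le_tsum_norm
          (f := fun i : ℕ => x ^ (i + n) / ((i + n).factorial : ℝ))
          (by simpa [Real.norm_eq_abs, abs_div, abs_pow] using hsum1)
        simpa [Real.norm_eq_abs, abs_div, abs_pow] using this
    _ ≤ ∑' i : ℕ, |x| ^ n / n.factorial * (|x| ^ i / i.factorial) :=
        Summable.tsum_le_tsum hterm hsum1 hsum2
    _ = |x| ^ n / n.factorial * ∑' i : ℕ, |x| ^ i / (i.factorial : ℝ) := tsum_mul_left
    _ = |x| ^ n / n.factorial * Real.exp |x| := by rw [hexp |x|]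

section Aux

variable (ψ : ℝ) (a b : ℝ → ℝ)

/-- Candidate `n`-th derivative of the parametric integral. -/
noncomputable def stmt3Fn (n : ℕ) (k : ℝ) : ℝ :=
  ∫ r in (0:ℝ)..1, (ψ * a r) ^ n * Real.exp (ψ * (a r * k) + b r)

variable {ψ a b}

lemma stmt3_contOn (ha : ContinuousOn a (Set.Icc 0 1)) (hb : ContinuousOn b (Set.Icc 0 1))
    (n : ℕ) (x : ℝ) :
    ContinuousOn (fun r => (ψ * a r) ^ n * Real.exp (ψ * (a r * x) + b r)) (Set.Icc 0 1) :=
  ((continuousOn_const.mul ha).pow n).mul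
    (Real.continuous_exp.comp_continuousOn
      ((continuousOn_const.mul (ha.mul continuousOn_const)).add hb))

lemma stmt3_intInt (ha : ContinuousOn a (Set.Icc 0 1)) (hb : ContinuousOn b (Set.Icc 0 1))
    (n : ℕ) (x : ℝ) :
    IntervalIntegrable (fun r => (ψ * a r) ^ n * Real.exp (ψ * (a r * x) + b r))
      MeasureTheory.volume 0 1 :=
  ContinuousOn.intervalIntegrable
    (by rw [Set.uIcc_of_le zero_le_one]; exact stmt3_contOn ha hb n x)

lemma stmt3_meas (ha : ContinuousOn a (Set.Icc 0 1)) (hb : ContinuousOn b (Set.Icc 0 1))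
    (n : ℕ) (x : ℝ) :
    MeasureTheory.AEStronglyMeasurable
      (fun r => (ψ * a r) ^ n * Real.exp (ψ * (a r * x) + b r))
      (MeasureTheory.volume.restrict (Set.uIoc (0:ℝ) 1)) := by
  rw [Set.uIoc_of_le zero_le_one]
  exact ((stmt3_contOn ha hb n x).mono Set.Ioc_subset_Icc_self).aestronglyMeasurable
    measurableSet_Ioc

lemma stmt3_deriv (hψ : 0 < ψ) (hθ : ∃ θ : ℝ, 0 < θ ∧ θ ≤ 1 ∧ ∀ r ∈ Set.Icc (0:ℝ) 1,
      |a r| ≤ θ * (1 - r))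
    (ha : ContinuousOn a (Set.Icc 0 1)) (hb : ContinuousOn b (Set.Icc 0 1))
    (hbB : ∀ r ∈ Set.Icc (0 : ℝ) 1, 0 ≤ b r ∧ b r ≤ ψ * (1 - r))
    (n : ℕ) (k₀ : ℝ) :
    HasDerivAt (stmt3Fn ψ a b n) (stmt3Fn ψ a b (n+1) k₀) k₀ := by
  obtain ⟨θ, hθ0, hθ1, haB⟩ := hθ
  have key := intervalIntegral.hasDerivAt_integral_of_dominated_loc_of_deriv_le
    (F := fun x r => (ψ * a r) ^ n * Real.exp (ψ * (a r * x) + b r))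
    (F' := fun x r => (ψ * a r) ^ (n+1) * Real.exp (ψ * (a r * x) + b r))
    (bound := fun _ => ψ ^ (n+1) * Real.exp (ψ * (|k₀| + 1) + ψ))
    (μ := MeasureTheory.volume) (a := 0) (b := 1) (x₀ := k₀) (Metric.ball_mem_nhds k₀ one_pos)
    (Filter.Eventually.of_forall (fun x => stmt3_meas ha hb n x))
    (stmt3_intInt ha hb n k₀)
    (stmt3_meas ha hb (n+1) k₀)
    ?_ (intervalIntegrable_const) ?_
  · exact key.2
  · -- bound
    refine Filter.Eventually.of_forall (fun t ht x hx => ?_)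
    rw [Set.uIoc_of_le zero_le_one] at ht
    have ht' : t ∈ Set.Icc (0:ℝ) 1 := Set.Ioc_subset_Icc_self ht
    have ha1 : |a t| ≤ θ * (1 - t) := haB t ht'
    have ht0 : (0:ℝ) ≤ 1 - t := by linarith [ht'.2]
    have ht1 : 1 - t ≤ 1 := by linarith [ht'.1]
    have hθt : θ * (1 - t) ≤ 1 := by nlinarith
    have hψa : |ψ * a t| ≤ ψ := by
      rw [abs_mul, abs_of_pos hψ]
      nlinarith [abs_nonneg (a t)]
    have hxk : |x| ≤ |k₀| + 1 := by
      have := abs_sub_abs_le_abs_sub x k₀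
      have hd : |x - k₀| < 1 := by simpa [Metric.mem_ball, Real.dist_eq] using hx
      linarith
    have hE : ψ * (a t * x) + b t ≤ ψ * (|k₀| + 1) + ψ := by
      have h1 : ψ * (a t * x) ≤ ψ * (|k₀| + 1) := by
        have : a t * x ≤ |k₀| + 1 := by
          calc a t * x ≤ |a t * x| := le_abs_self _
            _ = |a t| * |x| := abs_mul _ _
            _ ≤ 1 * (|k₀| + 1) := by
                apply mul_le_mul (le_trans ha1 hθt) hxk (abs_nonneg _) zero_le_one
            _ = |k₀| + 1 := one_mul _
        exact mul_le_mul_of_nonneg_left this hψ.le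
      have h2 : b t ≤ ψ := by
        have := (hbB t ht').2
        nlinarith
      linarith
    calc ‖(ψ * a t) ^ (n+1) * Real.exp (ψ * (a t * x) + b t)‖
        = |ψ * a t| ^ (n+1) * Real.exp (ψ * (a t * x) + b t) := by
          rw [Real.norm_eq_abs, abs_mul, abs_pow, abs_of_pos (Real.exp_pos _)]
      _ ≤ ψ ^ (n+1) * Real.exp (ψ * (|k₀| + 1) + ψ) := by
          gcongr
  · -- differentiability
    refine Filter.Eventually.of_forall (fun t _ x _ => ?_)
    have h1 : HasDerivAt (fun x : ℝ => ψ * (a t * x) + b t) (ψ * a t) x := by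
      simpa using (((hasDerivAt_id x).const_mul (a t)).const_mul ψ).add_const (b t)
    have h2 := (Real.hasDerivAt_exp (ψ * (a t * x) + b t)).comp x h1
    have h3 : HasDerivAt (fun x => (ψ * a t) ^ n * Real.exp (ψ * (a t * x) + b t))
        ((ψ * a t) ^ n * (Real.exp (ψ * (a t * x) + b t) * (ψ * a t))) x :=
      h2.const_mul _
    convert h3 using 1
    · rfl
    · rfl
    ring

end Aux

/-- Taylor-truncation error bound for `f k = ∫_0^1 exp (ψ (a r * k + b r)) dr`:
for `k ∈ [1, 1/θ]` the error of the degree-`L` Taylor polynomial at `0` is at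
most `e^{2ψ} ψ^{L+1} / (L+2)!`. -/
theorem stmt3 (ψ θ : ℝ) (hψ : 0 < ψ) (hθ : 0 < θ ∧ θ ≤ 1) (a b : ℝ → ℝ)
    (ha : ContinuousOn a (Set.Icc 0 1)) (hb : ContinuousOn b (Set.Icc 0 1))
    (haB : ∀ r ∈ Set.Icc (0 : ℝ) 1, |a r| ≤ θ * (1 - r))
    (hbB : ∀ r ∈ Set.Icc (0 : ℝ) 1, 0 ≤ b r ∧ b r ≤ ψ * (1 - r))
    (f : ℝ → ℝ)
    (hf : ∀ k, f k = ∫ r in (0 : ℝ)..1, Real.exp (ψ * (a r * k) + b r))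
    (K : ℝ) (hK : K = 1 / θ) (k : ℝ) (hk : k ∈ Set.Icc 1 K) (L : ℕ) :
    |f k - ∑ l ∈ Finset.range (L + 1), iteratedDeriv l f 0 * k ^ l / l.factorial|
      ≤ Real.exp (2 * ψ) * ψ ^ (L + 1) / (L + 2).factorial := by
  obtain ⟨hθ0, hθ1⟩ := hθ
  have hθex : ∃ θ' : ℝ, 0 < θ' ∧ θ' ≤ 1 ∧ ∀ r ∈ Set.Icc (0:ℝ) 1, |a r| ≤ θ' * (1 - r) :=
    ⟨θ, hθ0, hθ1, haB⟩
  -- iterated derivatives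
  have hFd : ∀ n, iteratedDeriv n f = stmt3Fn ψ a b n := by
    intro n
    induction n with
    | zero =>
      rw [iteratedDeriv_zero]
      funext x
      rw [hf x, stmt3Fn]
      apply intervalIntegral.integral_congr
      intro r _
      simp
    | succ m ih =>
      rw [iteratedDeriv_succ, ih]
      funext x
      exact (stmt3_deriv hψ hθex ha hb hbB m x).deriv
  have hk1 : (1:ℝ) ≤ k := hk.1
  have hkK : k ≤ 1 / θ := hK ▸ hk.2
  have hθk : θ * k ≤ 1 := by
    calc θ * k ≤ θ * (1 / θ) := by gcongr
      _ = 1 := by field_simp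
  -- rewrite the sum as an integral
  have hsum1 : ∀ l : ℕ, stmt3Fn ψ a b l 0 * k ^ l / l.factorial
      = ∫ r in (0:ℝ)..1,
          ((ψ * a r) ^ l * Real.exp (ψ * (a r * 0) + b r)) * (k ^ l / l.factorial) := by
    intro l
    rw [mul_div_assoc, stmt3Fn, ← intervalIntegral.integral_mul_const]
  have hintl : ∀ l : ℕ, IntervalIntegrable
      (fun r => ((ψ * a r) ^ l * Real.exp (ψ * (a r * 0) + b r)) * (k ^ l / l.factorial))
      MeasureTheory.volume 0 1 := fun l => (stmt3_intInt ha hb l 0).mul_const _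
  have hsum2 : ∑ l ∈ Finset.range (L + 1), stmt3Fn ψ a b l 0 * k ^ l / l.factorial
      = ∫ r in (0:ℝ)..1, ∑ l ∈ Finset.range (L + 1),
          ((ψ * a r) ^ l * Real.exp (ψ * (a r * 0) + b r)) * (k ^ l / l.factorial) := by
    calc ∑ l ∈ Finset.range (L + 1), stmt3Fn ψ a b l 0 * k ^ l / l.factorial
        = ∑ l ∈ Finset.range (L + 1), ∫ r in (0:ℝ)..1,
            ((ψ * a r) ^ l * Real.exp (ψ * (a r * 0) + b r)) * (k ^ l / l.factorial) :=
          Finset.sum_congr rfl (fun l _ => hsum1 l)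
      _ = _ := (intervalIntegral.integral_finset_sum (fun l _ => hintl l)).symm
  -- the error as a single integral
  set H : ℝ → ℝ := fun r => Real.exp (ψ * (a r * k) + b r)
      - ∑ l ∈ Finset.range (L + 1),
          ((ψ * a r) ^ l * Real.exp (ψ * (a r * 0) + b r)) * (k ^ l / l.factorial) with hH
  have hint0 : IntervalIntegrable (fun r => Real.exp (ψ * (a r * k) + b r))
      MeasureTheory.volume 0 1 := by
    have := stmt3_intInt (ψ := ψ) ha hb 0 k
    simpa using this
  have hintS : IntervalIntegrable
      (fun r => ∑ l ∈ Finset.range (L + 1),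
          ((ψ * a r) ^ l * Real.exp (ψ * (a r * 0) + b r)) * (k ^ l / l.factorial))
      MeasureTheory.volume 0 1 := by
    apply ContinuousOn.intervalIntegrable
    rw [Set.uIcc_of_le zero_le_one]
    exact continuousOn_finset_sum _
      (fun l _ => (stmt3_contOn ha hb l 0).mul continuousOn_const)
  have herr : f k - ∑ l ∈ Finset.range (L + 1), iteratedDeriv l f 0 * k ^ l / l.factorial
      = ∫ r in (0:ℝ)..1, H r := by
    have : ∑ l ∈ Finset.range (L + 1), iteratedDeriv l f 0 * k ^ l / l.factorial
        = ∑ l ∈ Finset.range (L + 1), stmt3Fn ψ a b l 0 * k ^ l / l.factorial :=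
      Finset.sum_congr rfl (fun l _ => by rw [hFd l])
    rw [this, hsum2, hf k, ← intervalIntegral.integral_sub hint0 hintS]
  -- pointwise bound
  have hCnn : 0 ≤ Real.exp (2 * ψ) * ψ ^ (L + 1) / (L + 1).factorial := by positivity
  have hpt : ∀ r ∈ Set.Icc (0:ℝ) 1,
      |H r| ≤ Real.exp (2 * ψ) * ψ ^ (L + 1) / (L + 1).factorial * (1 - r) ^ (L + 1) := by
    intro r hr
    have ha1 : |a r| ≤ θ * (1 - r) := haB r hr
    have hb1 := hbB r hr
    have hr0 : (0:ℝ) ≤ 1 - r := by linarith [hr.2]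
    have hr1 : 1 - r ≤ 1 := by linarith [hr.1]
    set x := ψ * (a r * k) with hx
    have hHr : H r = Real.exp (b r)
        * (Real.exp x - ∑ l ∈ Finset.range (L + 1), x ^ l / l.factorial) := by
      rw [hH]
      have e1 : Real.exp (ψ * (a r * k) + b r) = Real.exp (b r) * Real.exp x := by
        rw [Real.exp_add, mul_comm]
      have e2 : ∀ l : ℕ, ((ψ * a r) ^ l * Real.exp (ψ * (a r * 0) + b r)) * (k ^ l / l.factorial)
          = Real.exp (b r) * (x ^ l / l.factorial) := by
        intro l
        have hxl : x ^ l = (ψ * a r) ^ l * k ^ l := by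
          rw [hx, ← mul_assoc, mul_pow]
        rw [hxl]
        simp only [mul_zero, zero_add]
        ring
      simp only [e1, Finset.sum_congr rfl (fun l _ => e2 l), ← Finset.mul_sum]
      ring
    have hxb : |x| ≤ ψ * (1 - r) := by
      have hk0 : (0:ℝ) ≤ k := by linarith
      rw [hx, abs_mul, abs_mul, abs_of_pos hψ, abs_of_nonneg hk0]
      calc ψ * (|a r| * k) ≤ ψ * (θ * (1 - r) * k) := by gcongr
        _ = ψ * (1 - r) * (θ * k) := by ring
        _ ≤ ψ * (1 - r) * 1 := by gcongr
        _ = ψ * (1 - r) := mul_one _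
    have htail := exp_tail_bound x (L + 1)
    have hbd : Real.exp (b r) ≤ Real.exp ψ := by
      apply Real.exp_le_exp.2
      nlinarith [hb1.2]
    have hxe : Real.exp |x| ≤ Real.exp ψ := by
      apply Real.exp_le_exp.2
      nlinarith [abs_nonneg x]
    have hxp : |x| ^ (L + 1) ≤ (ψ * (1 - r)) ^ (L + 1) :=
      pow_le_pow_left₀ (abs_nonneg x) hxb _
    calc |H r| = Real.exp (b r)
          * |Real.exp x - ∑ l ∈ Finset.range (L + 1), x ^ l / l.factorial| := by
          rw [hHr, abs_mul, abs_of_pos (Real.exp_pos _)]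
      _ ≤ Real.exp ψ * (|x| ^ (L + 1) / (L + 1).factorial * Real.exp |x|) := by
          gcongr
      _ ≤ Real.exp ψ * ((ψ * (1 - r)) ^ (L + 1) / (L + 1).factorial * Real.exp ψ) := by
          gcongr
      _ = Real.exp (2 * ψ) * ψ ^ (L + 1) / (L + 1).factorial * (1 - r) ^ (L + 1) := by
          rw [two_mul, Real.exp_add, mul_pow]
          ring
  -- integrability of |H| and of the bound
  have hHint : IntervalIntegrable H MeasureTheory.volume 0 1 := hint0.sub hintS
  have hHabs : IntervalIntegrable (fun r => |H r|) MeasureTheory.volume 0 1 := hHint.abs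
  have hbint : IntervalIntegrable
      (fun r => Real.exp (2 * ψ) * ψ ^ (L + 1) / (L + 1).factorial * (1 - r) ^ (L + 1))
      MeasureTheory.volume 0 1 :=
    (Continuous.intervalIntegrable (by continuity) 0 1)
  have hpoly : (∫ r in (0:ℝ)..1, (1 - r) ^ (L + 1)) = 1 / (L + 2) := by
    have := intervalIntegral.integral_comp_sub_left (a := (0:ℝ)) (b := 1)
      (fun y => y ^ (L + 1)) 1
    rw [this]
    norm_num [integral_pow]
    ring
  calc |f k - ∑ l ∈ Finset.range (L + 1), iteratedDeriv l f 0 * k ^ l / l.factorial|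
      = |∫ r in (0:ℝ)..1, H r| := by rw [herr]
    _ ≤ ∫ r in (0:ℝ)..1, |H r| :=
        intervalIntegral.abs_integral_le_integral_abs zero_le_one
    _ ≤ ∫ r in (0:ℝ)..1,
          Real.exp (2 * ψ) * ψ ^ (L + 1) / (L + 1).factorial * (1 - r) ^ (L + 1) :=
        intervalIntegral.integral_mono_on zero_le_one hHabs hbint hpt
    _ = Real.exp (2 * ψ) * ψ ^ (L + 1) / (L + 1).factorial * (1 / (L + 2)) := by
        rw [intervalIntegral.integral_const_mul, hpoly]
    _ = Real.exp (2 * ψ) * ψ ^ (L + 1) / (L + 2).factorial := by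
        have hfa : ((L + 2).factorial : ℝ) = (L + 2) * (L + 1).factorial := by
          exact_mod_cast Nat.factorial_succ (L + 1)
        rw [hfa]
        have h1 : ((L + 1).factorial : ℝ) ≠ 0 := by positivity
        have h2 : ((L : ℝ) + 2) ≠ 0 := by positivity
        field_simp
end

section
/- Let I(g) = Σ_{x ∈ Φ} G_x(g)·|x|^{-α} be interference where for each point x of a point process Φ the random gain G_x(g) takes value G_main with probability g and value g_side < G_main with probability 1−g, independently across points. If 0 ≤ g₁ ≤ g₂ ≤ 1, then I(g₁) is stochastically dominated by I(g₂); consequently, for any S > 0 and threshold τ > 0, the coverage probability P(S/I(g) > τ) is non-increasing in g. -/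
open MeasureTheory ProbabilityTheory

open ENNReal

section Core
variable {ι : Type*} [Fintype ι] [DecidableEq ι]

lemma stmt5_expand (i₀ : ι) (q : ι → Bool → ℝ≥0∞) (χ : (ι → Bool) → ℝ≥0∞) :
    ∑ f : ι → Bool, (∏ i, q i (f i)) * χ f
      = q i₀ true * ∑ y : {j // j ≠ i₀} → Bool,
          (∏ j : {j // j ≠ i₀}, q j (y j)) * χ ((Equiv.funSplitAt i₀ Bool).symm (true, y))
      + q i₀ false * ∑ y : {j // j ≠ i₀} → Bool,
          (∏ j : {j // j ≠ i₀}, q j (y j)) * χ ((Equiv.funSplitAt i₀ Bool).symm (false, y)) := by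
  have key : ∀ (b : Bool) (y : {j // j ≠ i₀} → Bool),
      ∏ i, q i ((Equiv.funSplitAt i₀ Bool).symm (b, y) i)
        = q i₀ b * ∏ j : {j // j ≠ i₀}, q j.1 (y j) := by
    intro b y
    rw [← Finset.mul_prod_erase Finset.univ _ (Finset.mem_univ i₀)]
    congr 1
    · simp [Equiv.funSplitAt_symm_apply]
    · rw [Finset.prod_subtype (Finset.univ.erase i₀)
        (p := fun j => j ≠ i₀) (fun x => by simp [Finset.mem_erase])]
      refine Fintype.prod_congr _ _ (fun j => ?_)
      simp [Equiv.funSplitAt_symm_apply, j.2]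
  rw [← Equiv.sum_comp (Equiv.funSplitAt i₀ Bool).symm
      (fun f => (∏ i, q i (f i)) * χ f), Fintype.sum_prod_type, Fintype.sum_bool]
  simp only [key, mul_assoc, ← Finset.mul_sum]

lemma stmt5_step (i₀ : ι) (q q' : ι → Bool → ℝ≥0∞)
    (hne : ∀ j, j ≠ i₀ → q' j = q j) (d : ℝ≥0∞)
    (h1 : q' i₀ true = q i₀ true + d) (h2 : q i₀ false = q' i₀ false + d)
    (χ : (ι → Bool) → ℝ≥0∞) (hχ : Monotone χ) :
    ∑ f : ι → Bool, (∏ i, q i (f i)) * χ f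
      ≤ ∑ f : ι → Bool, (∏ i, q' i (f i)) * χ f := by
  rw [stmt5_expand i₀ q χ, stmt5_expand i₀ q' χ]
  set e := (Equiv.funSplitAt i₀ Bool).symm
  have hR : ∀ y : {j // j ≠ i₀} → Bool,
      ∏ j : {j // j ≠ i₀}, q' j.1 (y j) = ∏ j : {j // j ≠ i₀}, q j.1 (y j) :=
    fun y => Fintype.prod_congr _ _ (fun j => by rw [hne j.1 j.2])
  simp only [hR]
  set Ct := ∑ y : {j // j ≠ i₀} → Bool, (∏ j : {j // j ≠ i₀}, q j.1 (y j)) * χ (e (true, y))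
  set Cf := ∑ y : {j // j ≠ i₀} → Bool, (∏ j : {j // j ≠ i₀}, q j.1 (y j)) * χ (e (false, y))
  have hCfCt : Cf ≤ Ct := by
    refine Finset.sum_le_sum (fun y _ => ?_)
    refine mul_le_mul_right (hχ ?_) _
    intro i
    by_cases h : i = i₀ <;> simp [e, Equiv.funSplitAt_symm_apply, h]
  calc q i₀ true * Ct + q i₀ false * Cf
      = q i₀ true * Ct + q' i₀ false * Cf + d * Cf := by rw [h2]; ring
    _ ≤ q i₀ true * Ct + q' i₀ false * Cf + d * Ct := by
        gcongr
    _ = q' i₀ true * Ct + q' i₀ false * Cf := by rw [h1]; ring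

lemma stmt5_core (q q' : ι → Bool → ℝ≥0∞)
    (h : ∀ i, ∃ d, q' i true = q i true + d ∧ q i false = q' i false + d)
    (χ : (ι → Bool) → ℝ≥0∞) (hχ : Monotone χ) :
    ∑ f : ι → Bool, (∏ i, q i (f i)) * χ f
      ≤ ∑ f : ι → Bool, (∏ i, q' i (f i)) * χ f := by
  suffices H : ∀ s : Finset ι,
      ∑ f : ι → Bool, (∏ i, q i (f i)) * χ f
        ≤ ∑ f : ι → Bool, (∏ i, (if i ∈ s then q' i else q i) (f i)) * χ f by
    simpa using H Finset.univ
  intro s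
  induction s using Finset.induction_on with
  | empty => simp
  | @insert i₀ s hi₀ ih =>
    refine ih.trans ?_
    obtain ⟨d, hd1, hd2⟩ := h i₀
    refine stmt5_step i₀ _ _ (fun j hj => ?_) d ?_ ?_ χ hχ
    · by_cases hjs : j ∈ s <;> simp [Finset.mem_insert, hj, hjs]
    · simp [hi₀, hd1]
    · simp [hi₀, hd2]

end Core

section Meas
variable {Ω : Type*} [MeasurableSpace Ω] {ι : Type*} [Fintype ι]

lemma stmt5_measure [DecidableEq ι] (μ : Measure Ω) [IsProbabilityMeasure μ]
    (G : ι → Ω → ℝ) (hmeas : ∀ i, Measurable (G i)) (w : ι → ℝ)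
    (a b : ℝ) (hab : b ≠ a) (g : ℝ) (hg0 : 0 ≤ g) (hg1 : g ≤ 1)
    (hma : ∀ i, μ {ω | G i ω = a} = ENNReal.ofReal g)
    (hmb : ∀ i, μ {ω | G i ω = b} = ENNReal.ofReal (1 - g))
    (hindep : iIndepFun G μ)
    (P : ℝ → Prop) [DecidablePred P] :
    μ {ω | P (∑ i, G i ω * w i)} = ∑ f : ι → Bool,
      (∏ i, if f i then ENNReal.ofReal g else ENNReal.ofReal (1 - g)) *
      (if P (∑ i, (if f i then a else b) * w i) then 1 else 0) := by
  classical
  set E : (ι → Bool) → Set Ω := fun f => ⋂ i, G i ⁻¹' {if f i then a else b} with hE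
  have hpre : ∀ (i : ι) (c : ℝ), G i ⁻¹' {c} = {ω | G i ω = c} := by
    intro i c; ext ω; simp [Set.mem_preimage]
  have hEmeas : ∀ f, MeasurableSet (E f) :=
    fun f => MeasurableSet.iInter (fun i => hmeas i (measurableSet_singleton _))
  have hEμ : ∀ f, μ (E f) = ∏ i, (if f i then ENNReal.ofReal g else ENNReal.ofReal (1 - g)) := by
    intro f
    rw [hE, hindep.meas_iInter (fun i => ⟨{if f i then a else b}, measurableSet_singleton _, rfl⟩)]
    refine Finset.prod_congr rfl (fun i _ => ?_)
    by_cases h : f i <;> simp [h, hpre, hma i, hmb i]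
  have hdisj : Pairwise (Function.onFun Disjoint E) := by
    intro f f' hff'
    obtain ⟨i, hi⟩ := Function.ne_iff.1 hff'
    refine Set.disjoint_left.2 (fun ω hωf hωf' => ?_)
    rw [hE, Set.mem_iInter] at hωf hωf'
    have h1 := hωf i; have h2 := hωf' i
    rw [hpre] at h1 h2
    simp only [Set.mem_setOf_eq] at h1 h2
    have heq : (if f i = true then a else b) = (if f' i = true then a else b) :=
      h1.symm.trans h2
    cases hfi : f i <;> cases hfi' : f' i
    · exact hi (hfi.trans hfi'.symm)
    · rw [hfi, hfi'] at heq; simp at heq; exact hab heq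
    · rw [hfi, hfi'] at heq; simp at heq; exact hab heq.symm
    · exact hi (hfi.trans hfi'.symm)
  have hBnull : μ (⋃ f, E f)ᶜ = 0 := by
    have hcover : ∀ i, μ ({ω | G i ω = a} ∪ {ω | G i ω = b}) = 1 := by
      intro i
      rw [measure_union ?_ (hpre i b ▸ hmeas i (measurableSet_singleton b)), hma i, hmb i,
        ← ENNReal.ofReal_add hg0 (by linarith)]
      · norm_num
      · refine Set.disjoint_left.2 (fun ω h1 h2 => ?_)
        simp only [Set.mem_setOf_eq] at h1 h2
        exact hab (h2.symm.trans h1)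
    refine measure_mono_null ?_ (measure_iUnion_null
      (fun i => (prob_compl_eq_zero_iff
        ((hpre i a ▸ hmeas i (measurableSet_singleton a)).union
          (hpre i b ▸ hmeas i (measurableSet_singleton b)))).2 (hcover i)))
    rw [← Set.compl_iInter]
    refine Set.compl_subset_compl.2 (fun ω hω => ?_)
    rw [Set.mem_iInter] at hω
    refine Set.mem_iUnion.2 ⟨fun i => if G i ω = a then true else false, Set.mem_iInter.2 (fun i => ?_)⟩
    by_cases h : G i ω = a
    · show ω ∈ G i ⁻¹' {if (if G i ω = a then true else false) = true then a else b}
      rw [if_pos h]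
      simp [hpre, h]
    · have := hω i
      simp only [Set.mem_union, Set.mem_setOf_eq, h, false_or] at this
      show ω ∈ G i ⁻¹' {if (if G i ω = a then true else false) = true then a else b}
      rw [if_neg h]
      simp [hpre, this]
  have hsum : ∀ f, ∀ ω ∈ E f, ∑ i, G i ω * w i = ∑ i, (if f i then a else b) * w i := by
    intro f ω hω
    rw [hE, Set.mem_iInter] at hω
    refine Finset.sum_congr rfl (fun i _ => ?_)
    have := hω i; rw [hpre] at this
    simp only [Set.mem_setOf_eq] at this
    rw [this]
  have hXE : ∀ f, {ω | P (∑ i, G i ω * w i)} ∩ E f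
      = if P (∑ i, (if f i then a else b) * w i) then E f else ∅ := by
    intro f
    by_cases hP : P (∑ i, (if f i then a else b) * w i)
    · rw [if_pos hP]
      refine Set.inter_eq_right.2 (fun ω hω => ?_)
      show P _
      rw [hsum f ω hω]; exact hP
    · rw [if_neg hP]
      refine Set.eq_empty_of_forall_notMem (fun ω ⟨hX, hE'⟩ => ?_)
      exact hP (hsum f ω hE' ▸ hX)
  calc μ {ω | P (∑ i, G i ω * w i)}
      = μ ({ω | P (∑ i, G i ω * w i)} ∩ ⋃ f, E f) := (measure_inter_conull hBnull).symm
    _ = μ (⋃ f, {ω | P (∑ i, G i ω * w i)} ∩ E f) := by rw [Set.inter_iUnion]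
    _ = ∑' f, μ ({ω | P (∑ i, G i ω * w i)} ∩ E f) := by
        refine measure_iUnion ?_ (fun f => ?_)
        · intro f f' hff'
          exact Disjoint.mono Set.inter_subset_right Set.inter_subset_right (hdisj hff')
        · rw [hXE f]
          split
          · exact hEmeas f
          · exact MeasurableSet.empty
    _ = ∑ f : ι → Bool, μ ({ω | P (∑ i, G i ω * w i)} ∩ E f) := tsum_fintype _
    _ = _ := by
        refine Finset.sum_congr rfl (fun f _ => ?_)
        by_cases hP : P (∑ i, (if f i then a else b) * w i)
        · rw [hXE f, if_pos hP, if_pos hP, mul_one, hEμ f]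
        · rw [hXE f, if_neg hP, if_neg hP, mul_zero, measure_empty]

end Meas

/-- Interference `I(g) = Σ_i G_i(g) · w_i` with i.i.d.-across-points gains taking
the value `Gmain` with probability `g` and `gside < Gmain` with probability
`1 - g`: if `g₁ ≤ g₂` then `I(g₁)` is stochastically dominated by `I(g₂)`, and
consequently the coverage probability `P(S / I(g) > τ)` is non-increasing in `g`. -/
theorem stmt5 {Ω : Type*} [MeasurableSpace Ω] (μ : Measure Ω) [IsProbabilityMeasure μ]
    {ι : Type*} [Fintype ι] (w : ι → ℝ) (hw : ∀ i, 0 < w i)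
    (Gmain gside : ℝ) (hG : gside < Gmain) (hgs : 0 < gside)
    (Gain : ℝ → ι → Ω → ℝ)
    (hmeas : ∀ g i, Measurable (Gain g i))
    (hmarg : ∀ g ∈ Set.Icc (0 : ℝ) 1, ∀ i,
      μ {ω | Gain g i ω = Gmain} = ENNReal.ofReal g ∧
      μ {ω | Gain g i ω = gside} = ENNReal.ofReal (1 - g))
    (hindep : ∀ g ∈ Set.Icc (0 : ℝ) 1, iIndepFun (Gain g) μ)
    (I : ℝ → Ω → ℝ) (hI : ∀ g ω, I g ω = ∑ i, Gain g i ω * w i)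
    (g₁ g₂ : ℝ) (hg : 0 ≤ g₁ ∧ g₁ ≤ g₂ ∧ g₂ ≤ 1) :
    (∀ t : ℝ, μ {ω | t < I g₁ ω} ≤ μ {ω | t < I g₂ ω}) ∧
      ∀ S τ : ℝ, 0 < S → 0 < τ →
        μ {ω | τ < S / I g₂ ω} ≤ μ {ω | τ < S / I g₁ ω} := by
  classical
  obtain ⟨hg10, hg12, hg21⟩ := hg
  have hg1mem : g₁ ∈ Set.Icc (0 : ℝ) 1 := ⟨hg10, by linarith⟩
  have hg2mem : g₂ ∈ Set.Icc (0 : ℝ) 1 := ⟨by linarith, hg21⟩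
  have hab : gside ≠ Gmain := ne_of_lt hG
  have hd1 : ENNReal.ofReal g₂ = ENNReal.ofReal g₁ + ENNReal.ofReal (g₂ - g₁) := by
    rw [← ENNReal.ofReal_add hg10 (by linarith)]
    congr 1; ring
  have hd2 : ENNReal.ofReal (1 - g₁) = ENNReal.ofReal (1 - g₂) + ENNReal.ofReal (g₂ - g₁) := by
    rw [← ENNReal.ofReal_add (by linarith) (by linarith)]
    congr 1; ring
  have hvmono : ∀ f f' : ι → Bool, f ≤ f' →
      (∑ i, (if f i then Gmain else gside) * w i) ≤ ∑ i, (if f' i then Gmain else gside) * w i := by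
    intro f f' hff'
    refine Finset.sum_le_sum (fun i _ => mul_le_mul_of_nonneg_right ?_ (hw i).le)
    have h := hff' i
    cases hf : f i <;> cases hf' : f' i
    · exact le_refl _
    · exact hG.le
    · rw [hf, hf'] at h; exact ((by decide : ¬ (true : Bool) ≤ false) h).elim
    · exact le_refl _
  constructor
  · intro t
    have hset : ∀ g, {ω | t < I g ω} = {ω | (fun x => t < x) (∑ i, Gain g i ω * w i)} := by
      intro g; ext ω; simp only [Set.mem_setOf_eq, hI]
    rw [hset g₁, hset g₂,
      stmt5_measure μ (Gain g₁) (hmeas g₁) w Gmain gside hab g₁ hg1mem.1 hg1mem.2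
        (fun i => (hmarg g₁ hg1mem i).1) (fun i => (hmarg g₁ hg1mem i).2)
        (hindep g₁ hg1mem) (fun x => t < x),
      stmt5_measure μ (Gain g₂) (hmeas g₂) w Gmain gside hab g₂ hg2mem.1 hg2mem.2
        (fun i => (hmarg g₂ hg2mem i).1) (fun i => (hmarg g₂ hg2mem i).2)
        (hindep g₂ hg2mem) (fun x => t < x)]
    refine stmt5_core (fun i b => if b then ENNReal.ofReal g₁ else ENNReal.ofReal (1 - g₁))
      (fun i b => if b then ENNReal.ofReal g₂ else ENNReal.ofReal (1 - g₂))
      (fun i => ⟨ENNReal.ofReal (g₂ - g₁), by simpa using hd1, by simpa using hd2⟩)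
      (fun f => if t < ∑ i, (if f i then Gmain else gside) * w i then 1 else 0)
      (fun f f' hff' => ?_)
    dsimp only
    by_cases hf : t < ∑ i, (if f i then Gmain else gside) * w i
    · rw [if_pos hf, if_pos (lt_of_lt_of_le hf (hvmono f f' hff'))]
    · rw [if_neg hf]
      exact zero_le
  · intro S τ hS hτ
    have hset : ∀ g, {ω | τ < S / I g ω}
        = {ω | (fun x => τ < S / x) (∑ i, Gain g i ω * w i)} := by
      intro g; ext ω; simp only [Set.mem_setOf_eq, hI]
    rw [hset g₁, hset g₂,
      stmt5_measure μ (Gain g₁) (hmeas g₁) w Gmain gside hab g₁ hg1mem.1 hg1mem.2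
        (fun i => (hmarg g₁ hg1mem i).1) (fun i => (hmarg g₁ hg1mem i).2)
        (hindep g₁ hg1mem) (fun x => τ < S / x),
      stmt5_measure μ (Gain g₂) (hmeas g₂) w Gmain gside hab g₂ hg2mem.1 hg2mem.2
        (fun i => (hmarg g₂ hg2mem i).1) (fun i => (hmarg g₂ hg2mem i).2)
        (hindep g₂ hg2mem) (fun x => τ < S / x)]
    have hre : ∀ g : ℝ,
        (∑ f : ι → Bool, (∏ i, if !(f i) then ENNReal.ofReal g else ENNReal.ofReal (1 - g)) *
          (if τ < S / ∑ i, (if !(f i) then Gmain else gside) * w i then 1 else 0))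
        = ∑ f : ι → Bool, (∏ i, if f i then ENNReal.ofReal g else ENNReal.ofReal (1 - g)) *
          (if τ < S / ∑ i, (if f i then Gmain else gside) * w i then 1 else 0) := by
      intro g
      exact Fintype.sum_bijective (fun f i => !(f i))
        (Function.Involutive.bijective (fun f => by funext i; simp)) _ _ (fun f => rfl)
    rw [← hre g₁, ← hre g₂]
    have hvpos : ∀ f : ι → Bool, Nonempty ι →
        0 < ∑ i, (if !(f i) then Gmain else gside) * w i := by
      intro f hne
      refine Finset.sum_pos (fun i _ => mul_pos ?_ (hw i)) Finset.univ_nonempty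
      by_cases h : f i <;> simp [h, hgs, hgs.trans hG]
    refine stmt5_core (fun i b => if !b then ENNReal.ofReal g₂ else ENNReal.ofReal (1 - g₂))
      (fun i b => if !b then ENNReal.ofReal g₁ else ENNReal.ofReal (1 - g₁))
      (fun i => ⟨ENNReal.ofReal (g₂ - g₁), by simpa using hd2, by simpa using hd1⟩)
      (fun f => if τ < S / ∑ i, (if !(f i) then Gmain else gside) * w i then 1 else 0)
      (fun f f' hff' => ?_)
    dsimp only
    rcases isEmpty_or_nonempty ι with hι | hι
    · have : f = f' := Subsingleton.elim f f'
      rw [this]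
    · by_cases hf : τ < S / ∑ i, (if !(f i) then Gmain else gside) * w i
      · have hle : (∑ i, (if !(f' i) then Gmain else gside) * w i)
            ≤ ∑ i, (if !(f i) then Gmain else gside) * w i := by
          refine hvmono _ _ (fun i => ?_)
          have h := hff' i
          cases hfi : f i <;> cases hfi' : f' i
          · exact le_refl _
          · simp
          · rw [hfi, hfi'] at h; exact ((by decide : ¬ (true : Bool) ≤ false) h).elim
          · exact le_refl _
        have h1 : τ * (∑ i, (if !(f i) then Gmain else gside) * w i) < S :=
          (lt_div_iff₀ (hvpos f hι)).1 hf
        have h2 : τ < S / ∑ i, (if !(f' i) then Gmain else gside) * w i :=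
          (lt_div_iff₀ (hvpos f' hι)).2 (lt_of_le_of_lt (mul_le_mul_of_nonneg_left hle hτ.le) h1)
        rw [if_pos hf, if_pos h2]
      · rw [if_neg hf]
        exact zero_le
end
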